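/- Let a and b be positive real numbers with a ≠ b, let τ ∈ (0,1), let υ ∈ ℂ with Re(υ) ≥ 0, and let u be a real number with |u| ≤ 1. Then (ab)^υ / (a² + b² − 2ab·u)^{τ+υ} = (Γ(τ)·Γ(υ+1)/Γ(τ+υ)) · (2 sin(τπ)/π) · ∫₀^{min(a,b)} [ (1 − (t²/(ab))²) / (1 + (t²/(ab))² − 2(t²/(ab))u)^{υ+1} ] · (t²/(ab))^υ · t^{2τ−1} / ((a² − t²)^τ (b² − t²)^τ) dt. -/

import Mathlib

open Real MeasureTheory Complex

lemma cE {r : ℝ} (hr : 0 < r) (w : ℂ) :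
    (r : ℂ) ^ w = Complex.exp (w * (Real.log r : ℂ)) := by
  rw [Complex.cpow_def_of_ne_zero (by exact_mod_cast hr.ne'), Complex.ofReal_log hr.le, mul_comm]

lemma rE {r : ℝ} (hr : 0 < r) (τ : ℝ) :
    ((r ^ τ : ℝ) : ℂ) = Complex.exp ((τ : ℂ) * (Real.log r : ℂ)) := by
  rw [Real.rpow_def_of_pos hr, Complex.ofReal_exp, mul_comm]
  push_cast
  ring_nf

lemma c1E {r : ℝ} (hr : 0 < r) : (r : ℂ) = Complex.exp ((Real.log r : ℝ) : ℂ) := by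
  rw [← Complex.ofReal_exp, Real.exp_log hr]

lemma betaIoi (A : ℝ) (hA : 0 < A) (p q : ℂ) (hp : 0 < p.re) (hq : 0 < q.re) :
    ∫ x in Set.Ioi (0:ℝ), (x:ℂ) ^ (p-1) * ((A + x : ℝ):ℂ) ^ (-(p+q))
      = (A:ℂ) ^ (-q) * Complex.betaIntegral p q := by
  have himg : (fun y : ℝ => A*y/(1-y)) '' Set.Ioo 0 1 = Set.Ioi 0 := by
    ext x
    constructor
    · rintro ⟨y, ⟨hy0, hy1⟩, rfl⟩
      have h1y : 0 < 1 - y := by linarith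
      exact div_pos (mul_pos hA hy0) h1y
    · intro hx
      have hx : (0:ℝ) < x := hx
      have hAx : 0 < A + x := by linarith
      refine ⟨x/(A+x), ⟨by positivity, (div_lt_one hAx).2 (by linarith)⟩, ?_⟩
      field_simp
      simp [hA.ne']
  have hderiv : ∀ y ∈ Set.Ioo (0:ℝ) 1,
      HasDerivWithinAt (fun y : ℝ => A*y/(1-y)) (A/(1-y)^2) (Set.Ioo 0 1) y := by
    intro y hy
    have h1y : (0:ℝ) < 1 - y := by linarith [hy.2]
    have h := (((hasDerivAt_id y).const_mul A).div
        ((hasDerivAt_const y 1).sub (hasDerivAt_id y)) h1y.ne')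
    simp only [id, Pi.sub_apply] at h
    have h2 : (A * 1 * (1-y) - A*y*(0-1))/(1-y)^2 = A/(1-y)^2 := by
      field_simp
      ring
    rw [h2] at h
    exact h.hasDerivWithinAt
  have hinj : Set.InjOn (fun y : ℝ => A*y/(1-y)) (Set.Ioo 0 1) := by
    intro y1 h1 y2 h2 heq
    have h1y1 : (0:ℝ) < 1 - y1 := by linarith [h1.2]
    have h1y2 : (0:ℝ) < 1 - y2 := by linarith [h2.2]
    simp only at heq
    field_simp at heq
    nlinarith [hA]
  rw [← himg, integral_image_eq_integral_abs_deriv_smul measurableSet_Ioo hderiv hinj]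
  have hptwise : ∀ y ∈ Set.Ioo (0:ℝ) 1,
      |A/(1-y)^2| • (((A*y/(1-y) : ℝ):ℂ) ^ (p-1) * ((A + A*y/(1-y) : ℝ):ℂ) ^ (-(p+q)))
      = (A:ℂ) ^ (-q) * ((y:ℂ) ^ (p-1) * ((1-y:ℝ):ℂ) ^ (q-1)) := by
    intro y hy
    obtain ⟨hy0, hy1⟩ := hy
    have h1y : (0:ℝ) < 1 - y := by linarith
    have hAy : (0:ℝ) < A*y/(1-y) := by positivity
    have hsum : A + A*y/(1-y) = A/(1-y) := by field_simp; ring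
    rw [hsum, abs_of_pos (by positivity), Complex.real_smul,
      cE hAy, cE (show (0:ℝ) < A/(1-y) by positivity), cE hy0, cE h1y, cE hA,
      c1E (show (0:ℝ) < A/(1-y)^2 by positivity),
      Real.log_div (by positivity : A*y ≠ 0) h1y.ne',
      Real.log_div hA.ne' (by positivity : ((1-y)^2 : ℝ) ≠ 0),
      Real.log_div hA.ne' h1y.ne',
      Real.log_mul hA.ne' hy0.ne', Real.log_pow]
    rw [← Complex.exp_add, ← Complex.exp_add, ← Complex.exp_add, ← Complex.exp_add]
    congr 1
    push_cast
    ring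
  rw [MeasureTheory.setIntegral_congr_fun measurableSet_Ioo hptwise,
    MeasureTheory.integral_const_mul, Complex.betaIntegral,
    intervalIntegral.integral_of_le (by norm_num : (0:ℝ) ≤ 1),
    MeasureTheory.integral_Ioc_eq_integral_Ioo]
  norm_num

lemma kahane_pt (a b τ u : ℝ) (υ : ℂ) (ha : 0 < a) (hb : 0 < b)
    (hu : |u| ≤ 1) (t : ℝ) (ht0 : 0 < t) (hta : t < a) (htb : t < b) :
    |2*t - 2*a^2*b^2/t^3| • (((a^2*b^2/t^2 - (a^2+b^2) + t^2 : ℝ):ℂ) ^ (-(τ:ℂ)) *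
        (((a^2+b^2-2*a*b*u) + (a^2*b^2/t^2 - (a^2+b^2) + t^2) : ℝ):ℂ) ^ (-(υ+1)))
    = (2 / ((a*b:ℝ):ℂ) ^ υ) *
        (((1 - (t^2/(a*b))^2 : ℝ) : ℂ)
            / ((1 + (t^2/(a*b))^2 - 2*(t^2/(a*b))*u : ℝ) : ℂ) ^ (υ + 1)
          * ((t^2/(a*b) : ℝ) : ℂ) ^ υ
          * ((t ^ (2*τ - 1) / ((a^2 - t^2) ^ τ * (b^2 - t^2) ^ τ) : ℝ) : ℂ)) := by
  obtain ⟨hu2, hu1⟩ := abs_le.mp hu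
  have ht2ab : t^2 < a*b := by nlinarith
  have ht4 : (0:ℝ) < a^2*b^2 - t^4 := by nlinarith
  have ha2 : 0 < a^2 - t^2 := by nlinarith
  have hb2 : 0 < b^2 - t^2 := by nlinarith
  have hs0 : 0 < t^2/(a*b) := by positivity
  have hs1 : t^2/(a*b) < 1 := (div_lt_one (by positivity)).2 ht2ab
  have hK : 0 < 1 + (t^2/(a*b))^2 - 2*(t^2/(a*b))*u := by
    nlinarith [mul_nonneg hs0.le (sub_nonneg.2 hu1), pow_pos (sub_pos.2 hs1) 2]
  have hne4 : (a^2*b^2 - t^4 : ℝ) ≠ 0 := ht4.ne'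
  have hne24 : (2*(a^2*b^2 - t^4) : ℝ) ≠ 0 := by positivity
  have hnet : (t:ℝ) ≠ 0 := ht0.ne'
  have hnet2 : (t^2:ℝ) ≠ 0 := by positivity
  have hnet3 : (t^3:ℝ) ≠ 0 := by positivity
  have hnea2 : (a^2 - t^2 : ℝ) ≠ 0 := ha2.ne'
  have hneb2 : (b^2 - t^2 : ℝ) ≠ 0 := hb2.ne'
  have hneab : (a^2*b^2 : ℝ) ≠ 0 := by positivity
  have hneprod : ((a^2-t^2)*(b^2-t^2) : ℝ) ≠ 0 := by positivity
  have hpos24 : (0:ℝ) < 2*(a^2*b^2-t^4) := by positivity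
  have hpos4 : (0:ℝ) < a^2*b^2-t^4 := ht4
  have e1 : (a^2+b^2-2*a*b*u) + (a^2*b^2/t^2 - (a^2+b^2) + t^2)
      = (1 + (t^2/(a*b))^2 - 2*(t^2/(a*b))*u) * (a^2*b^2/t^2) := by
    field_simp; ring
  have e2 : a^2*b^2/t^2 - (a^2+b^2) + t^2 = (a^2-t^2)*(b^2-t^2)/t^2 := by
    field_simp; ring
  have e3 : 1 - (t^2/(a*b))^2 = (a^2*b^2 - t^4)/(a^2*b^2) := by
    field_simp
  have e4 : 2*t - 2*a^2*b^2/t^3 = -(2*(a^2*b^2-t^4)/t^3) := by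
    field_simp; ring
  rw [e1, e2, e3, e4, abs_neg,
    abs_of_pos (div_pos hpos24 (by positivity)), Complex.real_smul]
  have F1 : ((2*(a^2*b^2-t^4)/t^3 : ℝ):ℂ)
      = Complex.exp ((Real.log 2 : ℂ) + (Real.log (a^2*b^2-t^4) : ℂ) - 3*(Real.log t : ℂ)) := by
    rw [c1E (div_pos hpos24 (by positivity))]
    congr 1
    rw [Real.log_div hne24 hnet3, Real.log_mul (by norm_num) hne4, Real.log_pow]
    push_cast; ring
  have F2 : (((a^2-t^2)*(b^2-t^2)/t^2 : ℝ):ℂ) ^ (-(τ:ℂ))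
      = Complex.exp ((-(τ:ℂ)) * ((Real.log (a^2-t^2) : ℂ) + (Real.log (b^2-t^2) : ℂ)
          - 2*(Real.log t : ℂ))) := by
    rw [cE (div_pos (mul_pos ha2 hb2) (by positivity))]
    congr 1
    rw [Real.log_div hneprod hnet2, Real.log_mul hnea2 hneb2, Real.log_pow]
    push_cast; ring
  have F3 : (((1 + (t^2/(a*b))^2 - 2*(t^2/(a*b))*u) * (a^2*b^2/t^2) : ℝ):ℂ) ^ (-(υ+1))
      = Complex.exp ((-(υ+1)) * ((Real.log (1 + (t^2/(a*b))^2 - 2*(t^2/(a*b))*u) : ℂ)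
          + 2*(Real.log a : ℂ) + 2*(Real.log b : ℂ) - 2*(Real.log t : ℂ))) := by
    rw [cE (mul_pos hK (by positivity))]
    congr 1
    rw [Real.log_mul hK.ne' (div_pos (mul_pos (pow_pos ha 2) (pow_pos hb 2)) (pow_pos ht0 2)).ne',
      Real.log_div hneab hnet2,
      Real.log_mul (pow_ne_zero 2 ha.ne') (pow_ne_zero 2 hb.ne'), Real.log_pow, Real.log_pow,
      Real.log_pow]
    push_cast; ring
  have F5 : ((a*b:ℝ):ℂ) ^ υ = Complex.exp (υ * ((Real.log a : ℂ) + (Real.log b : ℂ))) := by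
    rw [cE (by positivity)]
    congr 1
    rw [Real.log_mul ha.ne' hb.ne']
    push_cast; ring
  have F45 : (2:ℂ) / ((a*b:ℝ):ℂ)^υ
      = Complex.exp ((Real.log 2 : ℂ) - υ * ((Real.log a : ℂ) + (Real.log b : ℂ))) := by
    rw [F5, show (2:ℂ) = ((2:ℝ):ℂ) by norm_num, c1E (by norm_num : (0:ℝ) < 2),
      ← Complex.exp_sub]
  have F6 : (((a^2*b^2-t^4)/(a^2*b^2) : ℝ):ℂ)
      = Complex.exp ((Real.log (a^2*b^2-t^4) : ℂ) - 2*(Real.log a : ℂ) - 2*(Real.log b : ℂ)) := by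
    rw [c1E (div_pos hpos4 (by positivity))]
    congr 1
    rw [Real.log_div hne4 hneab,
      Real.log_mul (pow_ne_zero 2 ha.ne') (pow_ne_zero 2 hb.ne'), Real.log_pow, Real.log_pow]
    push_cast; ring
  have F7 : ((1 + (t^2/(a*b))^2 - 2*(t^2/(a*b))*u : ℝ):ℂ) ^ (υ+1)
      = Complex.exp ((υ+1) * (Real.log (1 + (t^2/(a*b))^2 - 2*(t^2/(a*b))*u) : ℂ)) :=
    cE hK _
  have F8 : ((t^2/(a*b) : ℝ):ℂ) ^ υ
      = Complex.exp (υ * (2*(Real.log t : ℂ) - (Real.log a : ℂ) - (Real.log b : ℂ))) := by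
    rw [cE hs0]
    congr 1
    rw [Real.log_div hnet2 (by positivity), Real.log_mul ha.ne' hb.ne', Real.log_pow]
    push_cast; ring
  have F9 : ((t ^ (2*τ-1) / ((a^2-t^2)^τ * (b^2-t^2)^τ) : ℝ):ℂ)
      = Complex.exp (((2*τ-1 : ℝ):ℂ)*(Real.log t : ℂ) - (τ:ℂ)*(Real.log (a^2-t^2) : ℂ)
          - (τ:ℂ)*(Real.log (b^2-t^2) : ℂ)) := by
    rw [Complex.ofReal_div, Complex.ofReal_mul, rE ht0, rE ha2, rE hb2,
      ← Complex.exp_add, ← Complex.exp_sub]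
    congr 1
    ring
  rw [F1, F45, F2, F3, F6, F7, F8, F9]
  simp only [div_eq_mul_inv, ← Complex.exp_neg, ← Complex.exp_add]
  congr 1
  push_cast
  ring

set_option maxHeartbeats 1000000 in
lemma substIoi (a b τ u : ℝ) (υ : ℂ) (ha : 0 < a) (hb : 0 < b)
    (hu : |u| ≤ 1) :
    ∫ x in Set.Ioi (0:ℝ), (x:ℂ) ^ (-(τ:ℂ)) * (((a^2+b^2-2*a*b*u) + x : ℝ):ℂ) ^ (-(υ+1))
      = (2 / ((a*b:ℝ):ℂ) ^ υ) * ∫ t in Set.Ioo (0:ℝ) (min a b),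
          (((1 - (t^2/(a*b))^2 : ℝ) : ℂ)
              / ((1 + (t^2/(a*b))^2 - 2*(t^2/(a*b))*u : ℝ) : ℂ) ^ (υ + 1)
            * ((t^2/(a*b) : ℝ) : ℂ) ^ υ
            * ((t ^ (2*τ - 1) / ((a^2 - t^2) ^ τ * (b^2 - t^2) ^ τ) : ℝ) : ℂ)) := by
  set m := min a b with hm
  have hm0 : 0 < m := lt_min ha hb
  have hma : m ≤ a := min_le_left a b
  have hmb : m ≤ b := min_le_right a b
  have hmm : m^2*(a^2+b^2-m^2) = a^2*b^2 := by
    rcases le_total a b with h | h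
    · rw [hm, min_eq_left h]; ring
    · rw [hm, min_eq_right h]; ring
  have himg : (fun t : ℝ => a^2*b^2/t^2 - (a^2+b^2) + t^2) '' Set.Ioo 0 m = Set.Ioi 0 := by
    ext x
    constructor
    · rintro ⟨t, ⟨ht0, htm⟩, rfl⟩
      have hta : t < a := lt_of_lt_of_le htm hma
      have htb : t < b := lt_of_lt_of_le htm hmb
      have ha2 : 0 < a^2 - t^2 := by nlinarith
      have hb2 : 0 < b^2 - t^2 := by nlinarith
      have : a^2*b^2/t^2 - (a^2+b^2) + t^2 = (a^2-t^2)*(b^2-t^2)/t^2 := by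
        field_simp; ring
      simp only [this]
      exact div_pos (mul_pos ha2 hb2) (by positivity)
    · intro hx
      have hx : (0:ℝ) < x := hx
      set S := a^2+b^2+x with hS
      have hS0 : 0 < S := by positivity
      have hSab : 4*a^2*b^2 ≤ S^2 := by nlinarith [sq_nonneg (a^2 - b^2), sq_nonneg x]
      set D := Real.sqrt (S^2 - 4*a^2*b^2) with hD
      have hD0 : 0 ≤ D := Real.sqrt_nonneg _
      have hD2 : D^2 = S^2 - 4*a^2*b^2 := Real.sq_sqrt (by linarith)
      have hDS : D < S := by nlinarith [mul_pos ha hb]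
      have ht2pos : 0 < (S - D)/2 := by linarith
      set t := Real.sqrt ((S-D)/2) with htdef
      have ht2 : t^2 = (S-D)/2 := Real.sq_sqrt ht2pos.le
      have ht0 : 0 < t := Real.sqrt_pos.2 ht2pos
      have htm : t < m := by
        rw [htdef]
        rw [show m = Real.sqrt (m^2) from (Real.sqrt_sq hm0.le).symm]
        apply Real.sqrt_lt_sqrt ht2pos.le
        nlinarith [mul_pos (pow_pos hm0 2) hx, sq_nonneg (S - 2*m^2 - D), mul_pos hm0 hm0]
      refine ⟨t, ⟨ht0, htm⟩, ?_⟩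
      have h4 : (S+D)/2 * ((S-D)/2) = a^2*b^2 := by nlinarith [hD2]
      have h5 : a^2*b^2/t^2 = (S+D)/2 := by
        rw [ht2, div_eq_iff ht2pos.ne']
        linarith [h4]
      show a^2*b^2/t^2 - (a^2+b^2) + t^2 = x
      rw [h5, ht2, hS]
      ring
  have hderiv : ∀ t ∈ Set.Ioo (0:ℝ) m,
      HasDerivWithinAt (fun t : ℝ => a^2*b^2/t^2 - (a^2+b^2) + t^2)
        (2*t - 2*a^2*b^2/t^3) (Set.Ioo 0 m) t := by
    intro t ht
    have ht0 : 0 < t := ht.1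
    have h1 : HasDerivAt (fun t : ℝ => a^2*b^2/t^2 - (a^2+b^2) + t^2)
        ((0 * t^2 - a^2*b^2 * (2*t^(2-1)))/(t^2)^2 - 0 + 2*t^(2-1)) t := by
      exact (((hasDerivAt_const t (a^2*b^2)).div (hasDerivAt_pow 2 t)
        (pow_ne_zero 2 ht0.ne')).sub (hasDerivAt_const t (a^2+b^2))).add (hasDerivAt_pow 2 t)
    have h2 : (0 * t^2 - a^2*b^2 * (2*t^(2-1)))/(t^2)^2 - 0 + 2*t^(2-1)
        = 2*t - 2*a^2*b^2/t^3 := by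
      field_simp
      ring
    rw [h2] at h1
    exact h1.hasDerivWithinAt
  have hinj : Set.InjOn (fun t : ℝ => a^2*b^2/t^2 - (a^2+b^2) + t^2) (Set.Ioo 0 m) := by
    intro t1 h1 t2 h2 heq
    have h10 : 0 < t1 := h1.1
    have h20 : 0 < t2 := h2.1
    have h1a : t1^2 < a*b := by nlinarith [h1.2, lt_of_lt_of_le h1.2 hma, lt_of_lt_of_le h1.2 hmb]
    have h2a : t2^2 < a*b := by nlinarith [h2.2, lt_of_lt_of_le h2.2 hma, lt_of_lt_of_le h2.2 hmb]
    simp only at heq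
    have key : (t2^2 - t1^2) * (a^2*b^2 - t1^2*t2^2) = 0 := by
      field_simp at heq
      nlinarith [heq]
    have hlt : t1^2*t2^2 < a^2*b^2 := by nlinarith [mul_pos (mul_pos ha hb) (mul_pos ha hb)]
    have h12 : t1^2 = t2^2 := by
      rcases mul_eq_zero.mp key with h | h
      · linarith
      · nlinarith
    rw [← Real.sqrt_sq h10.le, ← Real.sqrt_sq h20.le, h12]
  rw [← himg, integral_image_eq_integral_abs_deriv_smul measurableSet_Ioo hderiv hinj]
  rw [← MeasureTheory.integral_const_mul]
  apply MeasureTheory.setIntegral_congr_fun measurableSet_Ioo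
  intro t ht
  exact kahane_pt a b τ u υ ha hb hu t ht.1 (lt_of_lt_of_le ht.2 hma) (lt_of_lt_of_le ht.2 hmb)

set_option maxHeartbeats 1000000 in
theorem kahane_identity (a b τ u : ℝ) (υ : ℂ) (ha : 0 < a) (hb : 0 < b) (hab : a ≠ b)
    (hτ : τ ∈ Set.Ioo (0:ℝ) 1) (hυ : 0 ≤ υ.re) (hu : |u| ≤ 1) :
    ((a * b : ℝ) : ℂ) ^ υ / ((a^2 + b^2 - 2*a*b*u : ℝ) : ℂ) ^ ((τ : ℂ) + υ)
      = Complex.Gamma (τ : ℂ) * Complex.Gamma (υ + 1) / Complex.Gamma ((τ : ℂ) + υ)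
        * ((2 * Real.sin (τ * π) / π : ℝ) : ℂ)
        * ∫ t in (0:ℝ)..min a b,
            ((1 - (t^2/(a*b))^2 : ℝ) : ℂ)
              / ((1 + (t^2/(a*b))^2 - 2*(t^2/(a*b))*u : ℝ) : ℂ) ^ (υ + 1)
            * ((t^2/(a*b) : ℝ) : ℂ) ^ υ
            * ((t ^ (2*τ - 1) / ((a^2 - t^2) ^ τ * (b^2 - t^2) ^ τ) : ℝ) : ℂ) := by
  obtain ⟨hτ0, hτ1⟩ := hτ
  obtain ⟨hu2, hu1⟩ := abs_le.mp hu
  have habne : a - b ≠ 0 := sub_ne_zero.2 hab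
  have hApos : 0 < a^2 + b^2 - 2*a*b*u := by
    have h1 : 0 < (a-b)^2 := lt_of_le_of_ne (sq_nonneg _) (Ne.symm (pow_ne_zero 2 habne))
    nlinarith [mul_pos ha hb]
  have hp : 0 < (1 - (τ:ℂ)).re := by
    simp only [Complex.sub_re, Complex.one_re, Complex.ofReal_re]
    linarith
  have hq : 0 < ((τ:ℂ) + υ).re := by
    simp only [Complex.add_re, Complex.ofReal_re]
    linarith
  have hbeta := betaIoi (a^2+b^2-2*a*b*u) hApos (1-(τ:ℂ)) ((τ:ℂ)+υ) hp hq
  rw [show (1-(τ:ℂ))-1 = -(τ:ℂ) by ring, show -((1-(τ:ℂ))+((τ:ℂ)+υ)) = -(υ+1) by ring]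
    at hbeta
  have hsub := substIoi a b τ u υ ha hb hu
  have key := hsub.symm.trans hbeta
  -- notation
  set I := ∫ t in Set.Ioo (0:ℝ) (min a b),
      (((1 - (t^2/(a*b))^2 : ℝ) : ℂ)
          / ((1 + (t^2/(a*b))^2 - 2*(t^2/(a*b))*u : ℝ) : ℂ) ^ (υ + 1)
        * ((t^2/(a*b) : ℝ) : ℂ) ^ υ
        * ((t ^ (2*τ - 1) / ((a^2 - t^2) ^ τ * (b^2 - t^2) ^ τ) : ℝ) : ℂ)) with hIdef
  set B := Complex.betaIntegral (1-(τ:ℂ)) ((τ:ℂ)+υ) with hBdef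
  set W := ((a*b:ℝ):ℂ) ^ υ with hWdef
  set X := ((a^2 + b^2 - 2*a*b*u : ℝ) : ℂ) ^ ((τ : ℂ) + υ) with hXdef
  have hA0 : ((a^2 + b^2 - 2*a*b*u : ℝ) : ℂ) ≠ 0 := by
    exact_mod_cast Complex.ofReal_ne_zero.2 hApos.ne'
  have hXne : X ≠ 0 := by
    rw [hXdef]
    intro h
    exact hA0 ((Complex.cpow_eq_zero_iff _ _).mp h).1
  have hWne : W ≠ 0 := by
    rw [hWdef]
    intro h
    exact (Complex.ofReal_ne_zero.2 (by positivity : (a*b:ℝ) ≠ 0))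
      ((Complex.cpow_eq_zero_iff _ _).mp h).1
  have hcpneg : ((a^2 + b^2 - 2*a*b*u : ℝ) : ℂ) ^ (-((τ:ℂ)+υ)) = X⁻¹ := by
    rw [hXdef, Complex.cpow_neg]
  rw [hcpneg] at key
  have hI2 : I * 2 = W * (X⁻¹ * B) := by
    rw [← key]
    field_simp
  have hΓ3 : Complex.Gamma ((τ:ℂ)+υ) ≠ 0 := Complex.Gamma_ne_zero_of_re_pos hq
  have hΓ4 : Complex.Gamma (1+υ) ≠ 0 := by
    apply Complex.Gamma_ne_zero_of_re_pos
    simp only [Complex.add_re, Complex.one_re]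
    linarith
  have hG := Complex.Gamma_mul_Gamma_eq_betaIntegral hp hq
  rw [show (1-(τ:ℂ))+((τ:ℂ)+υ) = 1+υ by ring] at hG
  have hsinR : 0 < Real.sin (τ*π) :=
    Real.sin_pos_of_pos_of_lt_pi (by positivity) (by nlinarith [Real.pi_pos])
  have hsinC : Complex.sin ((π:ℂ)*(τ:ℂ)) = ((Real.sin (τ*π) : ℝ) : ℂ) := by
    rw [Complex.ofReal_sin]
    push_cast
    ring_nf
  have hsinne : Complex.sin ((π:ℂ)*(τ:ℂ)) ≠ 0 := by
    rw [hsinC]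
    exact_mod_cast Complex.ofReal_ne_zero.2 hsinR.ne'
  have hrefl := Complex.Gamma_mul_Gamma_one_sub (τ:ℂ)
  rw [eq_div_iff hsinne] at hrefl
  have hπ : ((π:ℝ):ℂ) ≠ 0 := Complex.ofReal_ne_zero.2 Real.pi_ne_zero
  have hB : B = Complex.Gamma (1-(τ:ℂ)) * Complex.Gamma ((τ:ℂ)+υ) / Complex.Gamma (1+υ) := by
    rw [eq_div_iff hΓ4]
    linear_combination -hG
  -- rewrite the goal integral
  rw [intervalIntegral.integral_of_le (le_of_lt (lt_min ha hb)),
    MeasureTheory.integral_Ioc_eq_integral_Ioo]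
  rw [← hIdef, show υ + 1 = 1 + υ from add_comm υ 1]
  have hIval : I = W * (X⁻¹ * B) / 2 := by
    rw [eq_div_iff (two_ne_zero)]
    exact hI2
  rw [hIval, hB, div_eq_mul_inv W X]
  rw [show ((2 * Real.sin (τ * π) / π : ℝ) : ℂ)
      = 2 * Complex.sin ((π:ℂ)*(τ:ℂ)) / ((π:ℝ):ℂ) by rw [hsinC]; push_cast; ring]
  field_simp
  rw [mul_comm ((π:ℝ):ℂ) (τ:ℂ)] at hrefl
  linear_combination (-1:ℂ) * hrefl
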